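/- Let A be a real symmetric positive definite n×n matrix (n ≥ 1), let λ₁,…,λₙ be its eigenvalues listed with multiplicity, and let a₁₁,…,aₙₙ be its diagonal entries. Then the harmonic mean of the eigenvalues is at most the harmonic mean of the diagonal entries: n / (Σ_{i=1}^n 1/λᵢ) ≤ n / (Σ_{i=1}^n 1/aᵢᵢ); equivalently, Σ_{i=1}^n 1/aᵢᵢ ≤ Σ_{i=1}^n 1/λᵢ. -/

import Mathlib

open Real Matrix

lemma inv_convexOn : ConvexOn ℝ (Set.Ioi 0) (fun x : ℝ => x⁻¹) := by
  have := convexOn_zpow (𝕜 := ℝ) (-1)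
  simpa using this

/-- For a real symmetric positive definite matrix, the harmonic mean of the
eigenvalues is at most the harmonic mean of the diagonal entries; equivalently,
`Σ 1/aᵢᵢ ≤ Σ 1/λᵢ`. -/
theorem stmt_11 (n : ℕ) (hn : 1 ≤ n) (A : Matrix (Fin n) (Fin n) ℝ)
    (hsymm : A.IsSymm) (hpd : A.PosDef) :
    (∑ i, (A i i)⁻¹) ≤ (∑ i, (hpd.isHermitian.eigenvalues i)⁻¹) ∧
    (n : ℝ) / (∑ i, (hpd.isHermitian.eigenvalues i)⁻¹)
      ≤ (n : ℝ) / (∑ i, (A i i)⁻¹) := by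
  classical
  set hA := hpd.isHermitian
  set U : Matrix (Fin n) (Fin n) ℝ := (hA.eigenvectorUnitary : Matrix (Fin n) (Fin n) ℝ)
  set μ := hA.eigenvalues
  have hμpos : ∀ j, 0 < μ j := fun j => hpd.eigenvalues_pos j
  -- diagonal entries as convex combinations of eigenvalues
  have hdiag : ∀ i, A i i = ∑ j, (U i j)^2 * μ j := by
    intro i
    conv_lhs => rw [hA.spectral_theorem, Unitary.conjStarAlgAut_apply]
    rw [Matrix.mul_apply]
    refine Finset.sum_congr rfl fun j _ => ?_
    rw [Matrix.mul_diagonal]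
    simp only [Matrix.star_apply, star_trivial]
    simp only [Function.comp_apply, RCLike.ofReal_real_eq_id, id_eq, star_trivial]
    ring
  -- row sums of (U i j)^2 are 1
  have hrow : ∀ i, ∑ j, (U i j)^2 = 1 := by
    intro i
    have h : (U * star U) i i = (1 : Matrix (Fin n) (Fin n) ℝ) i i := by
      rw [Matrix.mem_unitaryGroup_iff.mp hA.eigenvectorUnitary.2]
    simpa [Matrix.mul_apply, Matrix.conjTranspose_apply, pow_two] using h
  -- column sums of (U i j)^2 are 1
  have hcol : ∀ j, ∑ i, (U i j)^2 = 1 := by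
    intro j
    have h : (star U * U) j j = (1 : Matrix (Fin n) (Fin n) ℝ) j j := by
      rw [Matrix.mem_unitaryGroup_iff'.mp hA.eigenvectorUnitary.2]
    simpa [Matrix.mul_apply, Matrix.conjTranspose_apply, pow_two] using h
  have hApos : ∀ i, 0 < A i i := by
    intro i
    rw [hdiag i]
    have : ∃ j, U i j ≠ 0 := by
      by_contra h
      push_neg at h
      have := hrow i
      simp [h] at this
    obtain ⟨j, hj⟩ := this
    apply Finset.sum_pos'
    · intro k _
      exact mul_nonneg (sq_nonneg _) (hμpos k).le
    · refine ⟨j, Finset.mem_univ j, mul_pos ?_ (hμpos j)⟩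
      exact (sq_nonneg _).lt_of_ne (Ne.symm (pow_ne_zero 2 hj))
  -- Jensen: (A i i)⁻¹ ≤ ∑ j (U i j)^2 * (μ j)⁻¹
  have hjensen : ∀ i, (A i i)⁻¹ ≤ ∑ j, (U i j)^2 * (μ j)⁻¹ := by
    intro i
    have := inv_convexOn.map_sum_le (t := Finset.univ) (w := fun j => (U i j)^2)
      (p := μ) (fun j _ => sq_nonneg _) (hrow i) (fun j _ => hμpos j)
    simpa [hdiag i, smul_eq_mul] using this
  have key : (∑ i, (A i i)⁻¹) ≤ (∑ i, (μ i)⁻¹) := by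
    calc (∑ i, (A i i)⁻¹) ≤ ∑ i, ∑ j, (U i j)^2 * (μ j)⁻¹ :=
          Finset.sum_le_sum (fun i _ => hjensen i)
      _ = ∑ j, (∑ i, (U i j)^2) * (μ j)⁻¹ := by
          rw [Finset.sum_comm]; simp [Finset.sum_mul]
      _ = ∑ j, (μ j)⁻¹ := by simp [hcol]
  refine ⟨key, ?_⟩
  have hpos : 0 < ∑ i, (A i i)⁻¹ := by
    apply Finset.sum_pos (fun i _ => inv_pos.mpr (hApos i))
    exact Finset.univ_nonempty_iff.mpr (Fin.pos_iff_nonempty.mp hn)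
  exact div_le_div_of_nonneg_left (Nat.cast_nonneg n) hpos key
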